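/- Let h : S¹ → S¹ be an orientation-preserving homeomorphism with h(ℤ[1/2]) = ℤ[1/2], and assume that both h ∘ ν₂ ∘ h⁻¹ and h⁻¹ ∘ ν₂ ∘ h are everywhere-defined elements of T̄_{2,1}. Then h normalizes T_{2,1}, i.e., h · T_{2,1} · h⁻¹ = T_{2,1}. -/

import Mathlib

noncomputable section

/-- `ℤ[1/n]` realized as a subset of `ℝ`: all reals of the form `a * n^b` with `a b : ℤ`. -/
def zpows (n : ℕ) : Set ℝ := {x : ℝ | ∃ a b : ℤ, x = (a : ℝ) * (n : ℝ) ^ b}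

/-- The defining properties of the (unique) ring homomorphism `φₙ : ℤ[1/n] → ℤ/(n-1)ℤ`,
expressed for a function `φ : ℝ → ZMod (n-1)` restricted to the subset `zpows n`. -/
def IsPhi (n : ℕ) (φ : ℝ → ZMod (n - 1)) : Prop :=
  (∀ x ∈ zpows n, ∀ y ∈ zpows n, φ (x + y) = φ x + φ y) ∧
  (∀ x ∈ zpows n, ∀ y ∈ zpows n, φ (x * y) = φ x * φ y) ∧
  φ 1 = 1

/-- Piecewise linearity data on the circle `ℝ/rℤ`, expressed for an `r`-periodic lift
`F : ℝ → ℝ`: there is an `r`-periodic break set `B ⊆ ℤ[1/n]`, finite in each period,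
off which `F` is locally affine with slopes integral powers of `n`. -/
def CircPL (n : ℕ) (r : ℝ) (F : ℝ → ℝ) : Prop :=
  ∃ B : Set ℝ,
    (B ∩ Set.Ico (0 : ℝ) r).Finite ∧ (∀ x ∈ B, x + r ∈ B ∧ x - r ∈ B) ∧ B ⊆ zpows n ∧
    ∀ x ∉ B, ∃ (k : ℤ) (c : ℝ), ∃ ε > 0, ∀ y : ℝ, |y - x| < ε → F y = (n : ℝ) ^ k * y + c

/-- Membership in `T_{n,r}`: an orientation-preserving homeomorphism of the circle
`S_r = ℝ/rℤ` (encoded by a strictly monotone surjective lift commuting with `x ↦ x + r`),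
piecewise linear with finitely many breaks, all breaks in `ℤ[1/n]`, all slopes integral
powers of `n`, and mapping (the image of) `ℤ[1/n]` into itself. -/
def MemT (n : ℕ) (r : ℝ) (f : AddCircle r → AddCircle r) : Prop :=
  ∃ F : ℝ → ℝ,
    (∀ x : ℝ, f (x : AddCircle r) = ((F x : ℝ) : AddCircle r)) ∧
    (∀ x : ℝ, F (x + r) = F x + r) ∧
    StrictMono F ∧ Function.Surjective F ∧ CircPL n r F ∧
    (∀ q ∈ zpows n, F q ∈ zpows n)

/-- An everywhere-defined element of `T̄_{n,r}`: a continuous, locally orientation-preserving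
local homeomorphism of the circle `S_r` (encoded by a strictly monotone continuous lift `G`
with `G (x + r) = G x + d·r` for some degree `d ≥ 1`), piecewise linear with finitely many
breaks, all breaks in `ℤ[1/n]`, all slopes integral powers of `n`, and mapping `ℤ[1/n]`
into itself. -/
def MemTbar (n : ℕ) (r : ℝ) (g : AddCircle r → AddCircle r) : Prop :=
  ∃ (G : ℝ → ℝ) (d : ℕ), 0 < d ∧
    (∀ x : ℝ, g (x : AddCircle r) = ((G x : ℝ) : AddCircle r)) ∧
    (∀ x : ℝ, G (x + r) = G x + (d : ℝ) * r) ∧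
    StrictMono G ∧ Continuous G ∧ CircPL n r G ∧
    (∀ q ∈ zpows n, G q ∈ zpows n)

/-- An orientation-preserving homeomorphism of the circle `S_r`, encoded by the existence
of a strictly monotone surjective lift commuting with `x ↦ x + r`. -/
def OrientedHomeo (r : ℝ) (h : AddCircle r → AddCircle r) : Prop :=
  ∃ H : ℝ → ℝ,
    (∀ x : ℝ, h (x : AddCircle r) = ((H x : ℝ) : AddCircle r)) ∧
    (∀ x : ℝ, H (x + r) = H x + r) ∧
    StrictMono H ∧ Function.Surjective H

/-- The doubling map `ν₂ : S¹ → S¹`, `x ↦ 2x (mod 1)`. -/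
def nu2 : AddCircle (1 : ℝ) → AddCircle (1 : ℝ) := fun z => z + z

/-- The image of the dyadic rationals `ℤ[1/2]` in the circle `S¹ = ℝ/ℤ`. -/
def dyadicCircle : Set (AddCircle (1 : ℝ)) :=
  {z : AddCircle (1 : ℝ) | ∃ q ∈ zpows 2, z = ((q : ℝ) : AddCircle (1 : ℝ))}

namespace St16
open Set
local notation "D" => zpows 2

lemma mem_D_iff {x : ℝ} : x ∈ D ↔ ∃ a b : ℤ, x = (a:ℝ) * (2:ℝ)^b := by
  unfold zpows; norm_num

lemma D_int (m : ℤ) : (m:ℝ) ∈ D := ⟨m, 0, by simp⟩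

lemma D_zero : (0:ℝ) ∈ D := by simpa using D_int 0

lemma D_add {x y : ℝ} (hx : x ∈ D) (hy : y ∈ D) : x + y ∈ D := by
  rw [mem_D_iff] at *
  obtain ⟨a, b, rfl⟩ := hx
  obtain ⟨a', b', rfl⟩ := hy
  refine ⟨a * 2 ^ (b - min b b').toNat + a' * 2 ^ (b' - min b b').toNat, min b b', ?_⟩
  push_cast
  rw [← zpow_natCast (2:ℝ) (b - min b b').toNat, ← zpow_natCast (2:ℝ) (b' - min b b').toNat,
    Int.toNat_of_nonneg (by omega), Int.toNat_of_nonneg (by omega)]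
  rw [add_mul, mul_assoc, mul_assoc, ← zpow_add₀ (by norm_num : (2:ℝ) ≠ 0),
    ← zpow_add₀ (by norm_num : (2:ℝ) ≠ 0)]
  ring_nf

lemma D_neg {x : ℝ} (hx : x ∈ D) : -x ∈ D := by
  rw [mem_D_iff] at *
  obtain ⟨a, b, rfl⟩ := hx
  exact ⟨-a, b, by push_cast; ring⟩

lemma D_sub {x y : ℝ} (hx : x ∈ D) (hy : y ∈ D) : x - y ∈ D := by
  simpa [sub_eq_add_neg] using D_add hx (D_neg hy)

lemma D_zpow_mul (k : ℤ) {x : ℝ} (hx : x ∈ D) : (2:ℝ)^k * x ∈ D := by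
  rw [mem_D_iff] at *
  obtain ⟨a, b, rfl⟩ := hx
  exact ⟨a, b + k, by rw [zpow_add₀ (by norm_num : (2:ℝ) ≠ 0)]; ring⟩

lemma D_add_int {x : ℝ} (hx : x ∈ D) (m : ℤ) : x + m ∈ D := D_add hx (D_int m)

/-- recover `x` from `2^k * x + c ∈ D`, `c ∈ D`. -/
lemma D_of_affine {k : ℤ} {x c : ℝ} (h : (2:ℝ)^k * x + c ∈ D) (hc : c ∈ D) : x ∈ D := by
  have := D_zpow_mul (-k) (D_sub h hc)
  have h2 : (2:ℝ)^(-k) * ((2:ℝ)^k * x + c - c) = x := by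
    rw [add_sub_cancel_right, ← mul_assoc, ← zpow_add₀ (by norm_num : (2:ℝ) ≠ 0)]
    simp
  rwa [h2] at this

/-- density of dyadics -/
lemma D_dense {a b : ℝ} (hab : a < b) : ∃ q ∈ D, a < q ∧ q < b := by
  obtain ⟨n, hn⟩ := pow_unbounded_of_one_lt ((b - a)⁻¹) (by norm_num : (1:ℝ) < 2)
  have h2n : (0:ℝ) < 2 ^ n := by positivity
  have hlt : (1:ℝ) / 2 ^ n < b - a := by
    rw [div_lt_iff₀ h2n]
    rw [inv_lt_iff_one_lt_mul₀ (by linarith)] at hn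
    nlinarith [hn]
  refine ⟨(⌊a * 2 ^ n⌋ + 1 : ℤ) / 2 ^ n, ?_, ?_, ?_⟩
  · rw [mem_D_iff]
    refine ⟨⌊a * 2 ^ n⌋ + 1, -n, ?_⟩
    rw [zpow_neg, div_eq_mul_inv]
    push_cast
    rw [zpow_natCast]
  · rw [lt_div_iff₀ h2n]
    push_cast
    exact Int.lt_floor_add_one (a * 2 ^ n)
  · rw [div_lt_iff₀ h2n]
    have h1 := Int.floor_le (a * 2 ^ n)
    have h2 : 1 < (b - a) * 2 ^ n := by
      rw [div_lt_iff₀ h2n] at hlt; linarith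
    push_cast
    nlinarith


/-- local affineness with slope a power of 2 -/
def AffAt (f : ℝ → ℝ) (x : ℝ) : Prop :=
  ∃ (k : ℤ) (c : ℝ), ∃ ε > 0, ∀ y : ℝ, |y - x| < ε → f y = (2:ℝ)^k * y + c

lemma two_zpow_pos (k : ℤ) : (0:ℝ) < 2^k := zpow_pos (by norm_num) k

lemma two_zpow_inj : Function.Injective (fun k : ℤ => (2:ℝ)^k) :=
  zpow_right_injective₀ (by norm_num) (by norm_num)

/-- uniqueness of local affine data -/
lemma aff_data_unique {f : ℝ → ℝ} {x : ℝ} {k k' : ℤ} {c c' : ℝ} {ε ε' : ℝ}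
    (hε : 0 < ε) (hε' : 0 < ε')
    (h : ∀ y : ℝ, |y - x| < ε → f y = (2:ℝ)^k * y + c)
    (h' : ∀ y : ℝ, |y - x| < ε' → f y = (2:ℝ)^k' * y + c') :
    k = k' ∧ c = c' := by
  set δ := min ε ε' / 2 with hδ
  have hδ0 : 0 < δ := by positivity
  have e1 : f x = (2:ℝ)^k * x + c := h x (by simpa using hε)
  have e1' : f x = (2:ℝ)^k' * x + c' := h' x (by simpa using hε')
  have hδε : δ < ε := by
    have h1 : δ < min ε ε' := by have := lt_min hε hε'; simp only [hδ]; linarith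
    exact lt_of_lt_of_le h1 (min_le_left _ _)
  have hδε' : δ < ε' := by
    have h1 : δ < min ε ε' := by have := lt_min hε hε'; simp only [hδ]; linarith
    exact lt_of_lt_of_le h1 (min_le_right _ _)
  have e2 : f (x + δ) = (2:ℝ)^k * (x + δ) + c := by
    apply h; rwa [add_sub_cancel_left, abs_of_pos hδ0]
  have e2' : f (x + δ) = (2:ℝ)^k' * (x + δ) + c' := by
    apply h'; rwa [add_sub_cancel_left, abs_of_pos hδ0]
  have hkk : (2:ℝ)^k = 2^k' := by
    have := e2.symm.trans e2'
    have h3 := e1.symm.trans e1'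
    have : (2:ℝ)^k * δ = 2^k' * δ := by linarith [this, h3]
    exact mul_right_cancel₀ (ne_of_gt hδ0) this
  have hk : k = k' := two_zpow_inj hkk
  refine ⟨hk, ?_⟩
  have := e1.symm.trans e1'
  rw [hkk] at this
  linarith

lemma affAt_comp {f g : ℝ → ℝ} {x : ℝ} (hf : AffAt f x) (hg : AffAt g (f x)) :
    AffAt (fun y => g (f y)) x := by
  obtain ⟨k, c, ε, hε, hfa⟩ := hf
  obtain ⟨l, d, η, hη, hga⟩ := hg
  refine ⟨l + k, (2:ℝ)^l * c + d, min ε (η / 2^k), by positivity, fun y hy => ?_⟩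
  have hy1 : |y - x| < ε := lt_of_lt_of_le hy (min_le_left _ _)
  have hy2 : |y - x| < η / 2^k := lt_of_lt_of_le hy (min_le_right _ _)
  have hfx : f x = (2:ℝ)^k * x + c := hfa x (by simpa using hε)
  have hfy : f y = (2:ℝ)^k * y + c := hfa y hy1
  have hdist : |f y - f x| < η := by
    rw [hfy, hfx]
    have : (2:ℝ)^k * y + c - ((2:ℝ)^k * x + c) = (2:ℝ)^k * (y - x) := by ring
    rw [this, abs_mul, abs_of_pos (two_zpow_pos k)]
    calc (2:ℝ)^k * |y - x| < 2^k * (η / 2^k) := by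
          exact mul_lt_mul_of_pos_left hy2 (two_zpow_pos k)
      _ = η := by field_simp
  show g (f y) = _
  rw [hga (f y) hdist, hfy, zpow_add₀ (by norm_num : (2:ℝ) ≠ 0)]
  ring

/-- locally affine on an open interval implies globally affine there -/
lemma affOn_Ioo {f : ℝ → ℝ} {a b : ℝ} (h : ∀ y ∈ Ioo a b, AffAt f y) :
    ∃ (k : ℤ) (c : ℝ), ∀ y ∈ Ioo a b, f y = (2:ℝ)^k * y + c := by
  rcases eq_empty_or_nonempty (Ioo a b) with he | ⟨y₀, hy₀⟩
  · exact ⟨0, 0, fun y hy => absurd (he ▸ hy) (notMem_empty y)⟩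
  obtain ⟨k₀, c₀, ε₀, hε₀, h₀⟩ := h y₀ hy₀
  refine ⟨k₀, c₀, ?_⟩
  set u : Set ℝ := {y | ∃ ε > 0, ∀ z : ℝ, |z - y| < ε → f z = (2:ℝ)^k₀ * z + c₀} with hu
  set v : Set ℝ := {y | ∃ (k : ℤ) (c : ℝ), (k ≠ k₀ ∨ c ≠ c₀) ∧
      ∃ ε > 0, ∀ z : ℝ, |z - y| < ε → f z = (2:ℝ)^k * z + c} with hv
  have hou : IsOpen u := by
    rw [Metric.isOpen_iff]
    rintro y ⟨ε, hε, hy⟩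
    exact ⟨ε/2, by positivity, fun z hz => ⟨ε/2, by positivity, fun w hw => hy w (by
      rw [Metric.mem_ball, Real.dist_eq] at hz
      have : |w - y| ≤ |w - z| + |z - y| := abs_sub_le w z y
      linarith)⟩⟩
  have hov : IsOpen v := by
    rw [Metric.isOpen_iff]
    rintro y ⟨k, c, hne, ε, hε, hy⟩
    exact ⟨ε/2, by positivity, fun z hz => ⟨k, c, hne, ε/2, by positivity, fun w hw => hy w (by
      rw [Metric.mem_ball, Real.dist_eq] at hz
      have : |w - y| ≤ |w - z| + |z - y| := abs_sub_le w z y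
      linarith)⟩⟩
  have hcover : Ioo a b ⊆ u ∪ v := by
    intro y hy
    obtain ⟨k, c, ε, hε, hf⟩ := h y hy
    rw [mem_union, hu, hv]
    simp only [mem_setOf_eq]
    by_cases hk : k = k₀ ∧ c = c₀
    · exact Or.inl ⟨ε, hε, by rw [← hk.1, ← hk.2] at *; exact hf⟩
    · exact Or.inr ⟨k, c, by tauto, ε, hε, hf⟩
  have hne_u : (Ioo a b ∩ u).Nonempty := ⟨y₀, hy₀, by rw [hu]; exact ⟨ε₀, hε₀, h₀⟩⟩
  intro y hy
  rcases hcover hy with hyu | hyv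
  · rw [hu] at hyu
    obtain ⟨ε, hε, hf⟩ := hyu
    exact hf y (by simpa using hε)
  · exfalso
    obtain ⟨z, hz, hzu, hzv⟩ := isPreconnected_Ioo (a := a) (b := b) u v hou hov hcover hne_u ⟨y, hy, hyv⟩
    rw [hu] at hzu
    rw [hv] at hzv
    obtain ⟨ε, hε, hz1⟩ := hzu
    obtain ⟨k, c, hne, ε', hε', hz2⟩ := hzv
    obtain ⟨hk, hc⟩ := aff_data_unique hε' hε hz2 hz1
    tauto

/-- integer translates: from step-1 periodicity law -/
lemma per_int {f : ℝ → ℝ} {d : ℝ} (hper : ∀ x, f (x + 1) = f x + d) :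
    ∀ (m : ℤ) (x : ℝ), f (x + m) = f x + m * d := by
  have key : ∀ (n : ℕ) (x : ℝ), f (x + n) = f x + n * d := by
    intro n
    induction n with
    | zero => simp
    | succ n ih =>
      intro x
      have : (x:ℝ) + (n+1:ℕ) = (x + n) + 1 := by push_cast; ring
      rw [this, hper, ih]
      push_cast; ring
  intro m x
  rcases le_or_gt 0 m with hm | hm
  · lift m to ℕ using hm
    exact_mod_cast key m x
  · have hm' : 0 ≤ -m := by omega
    lift -m to ℕ using hm' with n hn
    have : x + m = x - n := by
      have : (n:ℝ) = -m := by exact_mod_cast congrArg (Int.cast : ℤ → ℝ) hn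
      rw [this]; ring
    rw [this]
    have := key n (x - n)
    rw [sub_add_cancel] at this
    have hnm : (n:ℝ) = -(m:ℝ) := by
      have : ((n:ℤ):ℝ) = ((-m:ℤ):ℝ) := by exact_mod_cast congrArg (Int.cast : ℤ → ℝ) hn
      push_cast at this; linarith
    rw [this]; rw [hnm]; ring

/-- a continuous integer-valued function on ℝ is constant -/
lemma intval_const {c : ℝ → ℝ} (hc : Continuous c) (hint : ∀ x, ∃ k : ℤ, c x = k) :
    ∀ x y, c x = c y := by
  intro x y
  by_contra hne
  obtain ⟨k, hk⟩ := hint x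
  obtain ⟨k', hk'⟩ := hint y
  rcases lt_or_gt_of_ne hne with hlt | hlt
  · have hmem : c x + 1/2 ∈ Icc (c x) (c y) := by
      constructor
      · linarith
      · rw [hk, hk'] at *
        have : k < k' := by exact_mod_cast hlt
        have : (k:ℝ) + 1 ≤ k' := by exact_mod_cast this
        linarith
    obtain ⟨z, hz⟩ := intermediate_value_univ x y hc hmem
    obtain ⟨k'', hk''⟩ := hint z
    rw [hk''] at hz
    rw [hk] at hz
    have : (2*k'' : ℝ) = 2*k + 1 := by linarith
    have : (2*k'' : ℤ) = 2*k + 1 := by exact_mod_cast this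
    omega
  · have hmem : c y + 1/2 ∈ Icc (c y) (c x) := by
      constructor
      · linarith
      · rw [hk, hk'] at *
        have : k' < k := by exact_mod_cast hlt
        have : (k':ℝ) + 1 ≤ k := by exact_mod_cast this
        linarith
    obtain ⟨z, hz⟩ := intermediate_value_univ y x hc hmem
    obtain ⟨k'', hk''⟩ := hint z
    rw [hk''] at hz
    rw [hk'] at hz
    have : (2*k'' : ℝ) = 2*k' + 1 := by linarith
    have : (2*k'' : ℤ) = 2*k' + 1 := by exact_mod_cast this
    omega

/-- a 1-periodic set finite in a fundamental domain is finite on compacts -/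
lemma periodic_finite {B : Set ℝ} (hfin : (B ∩ Ico (0:ℝ) 1).Finite)
    (hper : ∀ x ∈ B, x + 1 ∈ B ∧ x - 1 ∈ B) (a b : ℝ) :
    (B ∩ Icc a b).Finite := by
  have hint : ∀ (m : ℤ), ∀ x ∈ B, x + m ∈ B := by
    intro m
    induction m using Int.induction_on with
    | zero => simp
    | succ n ih =>
      intro x hx
      have := (hper _ (ih x hx)).1
      have he : x + (n:ℤ) + 1 = x + ((n:ℤ)+1 : ℤ) := by push_cast; ring
      rwa [he] at this
    | pred n ih =>
      intro x hx
      have := (hper _ (ih x hx)).2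
      have he : x + ((-(n:ℤ) : ℤ) : ℝ) - 1 = x + ((-(n:ℤ)-1 : ℤ) : ℝ) := by push_cast; ring
      rwa [he] at this
  have hsub : B ∩ Icc a b ⊆ ⋃ m ∈ Finset.Icc ⌊a⌋ ⌊b⌋, (fun t => t + (m:ℝ)) '' (B ∩ Ico 0 1) := by
    rintro x ⟨hxB, hxa, hxb⟩
    have h1 : x - ⌊x⌋ ∈ B := by
      have := hint (-⌊x⌋) x hxB
      rwa [Int.cast_neg, ← sub_eq_add_neg] at this
    have h2 : x - ⌊x⌋ ∈ Ico (0:ℝ) 1 := ⟨by linarith [Int.floor_le x], by linarith [Int.lt_floor_add_one x]⟩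
    refine mem_biUnion (Finset.mem_Icc.mpr ⟨Int.floor_mono hxa, Int.floor_mono hxb⟩) ?_
    exact ⟨x - ⌊x⌋, ⟨h1, h2⟩, by ring⟩
  exact Set.Finite.subset (Set.Finite.biUnion (Finset.Icc ⌊a⌋ ⌊b⌋).finite_toSet
    (fun m _ => hfin.image _)) hsub

/-- surjectivity from continuity and quasi-periodicity with positive degree -/
lemma surj_of_per {f : ℝ → ℝ} (hc : Continuous f) {d : ℝ} (hd : 0 < d)
    (hper : ∀ x, f (x + 1) = f x + d) : Function.Surjective f := by
  intro y
  have key := per_int hper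
  obtain ⟨n, hn⟩ := exists_nat_gt ((|y - f 0|) / d)
  have hn' : |y - f 0| < n * d := by
    rw [div_lt_iff₀ hd] at hn; linarith
  have h1 : f (0 + (-n : ℤ)) ≤ y := by
    rw [key (-n) 0]
    push_cast
    have := abs_lt.mp hn'
    linarith
  have h2 : y ≤ f (0 + (n : ℤ)) := by
    rw [key n 0]
    push_cast
    have := abs_lt.mp hn'
    linarith
  have hle : (0:ℝ) + (-n:ℤ) ≤ 0 + (n:ℤ) := by push_cast; linarith [Nat.cast_nonneg (α := ℝ) n]
  have := intermediate_value_Icc hle hc.continuousOn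
  obtain ⟨x, _, hx⟩ := this ⟨h1, h2⟩
  exact ⟨x, hx⟩


def BadSet (f : ℝ → ℝ) : Set ℝ := {x | ¬ AffAt f x}

lemma affAt_of_not_bad {f : ℝ → ℝ} {x : ℝ} (h : x ∉ BadSet f) : AffAt f x := not_not.mp h

/-- the constant of a local affine piece of a D-preserving map is in D -/
lemma const_mem_D {f : ℝ → ℝ} (hD : ∀ q ∈ D, f q ∈ D) {x : ℝ} {k : ℤ} {c ε : ℝ}
    (hε : 0 < ε) (hf : ∀ y : ℝ, |y - x| < ε → f y = (2:ℝ)^k * y + c) : c ∈ D := by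
  obtain ⟨q, hq, hq1, hq2⟩ := D_dense (show x < x + ε by linarith)
  have : f q = (2:ℝ)^k * q + c := hf q (by rw [abs_lt]; constructor <;> linarith)
  have hfq : (2:ℝ)^k * q + c ∈ D := this ▸ hD q hq
  have := D_sub hfq (D_zpow_mul k hq)
  simpa using this

structure Nice (f : ℝ → ℝ) : Prop where
  mono : StrictMono f
  cont : Continuous f
  mapsD : ∀ q ∈ D, f q ∈ D
  invD : ∀ x : ℝ, f x ∈ D → x ∈ D
  bad_sub : BadSet f ⊆ D
  bad_fin : ∀ a b : ℝ, (BadSet f ∩ Icc a b).Finite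

lemma invD_of_PL {f : ℝ → ℝ} {B : Set ℝ} (hBD : B ⊆ D)
    (hoff : ∀ x ∉ B, AffAt f x) (hD : ∀ q ∈ D, f q ∈ D) :
    ∀ x : ℝ, f x ∈ D → x ∈ D := by
  intro x hfx
  by_cases hxB : x ∈ B
  · exact hBD hxB
  · obtain ⟨k, c, ε, hε, hf⟩ := hoff x hxB
    have hc : c ∈ D := const_mem_D hD hε hf
    have hfx' : (2:ℝ)^k * x + c ∈ D := by
      rw [← hf x (by simpa using hε)]; exact hfx
    exact D_of_affine hfx' hc

/-- convert `CircPL 2 1` data into an `AffAt`-off-break-set statement -/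
lemma circPL_aff {f : ℝ → ℝ} (h : CircPL 2 1 f) :
    ∃ B : Set ℝ, (B ∩ Ico (0:ℝ) 1).Finite ∧ (∀ x ∈ B, x + 1 ∈ B ∧ x - 1 ∈ B) ∧
      B ⊆ D ∧ ∀ x ∉ B, AffAt f x := by
  obtain ⟨B, h1, h2, h3, h4⟩ := h
  refine ⟨B, h1, h2, h3, fun x hx => ?_⟩
  obtain ⟨k, c, ε, hε, hf⟩ := h4 x hx
  exact ⟨k, c, ε, hε, fun y hy => by rw [hf y hy]; norm_num⟩

lemma nice_of_PL {f : ℝ → ℝ} (hmono : StrictMono f) (hcont : Continuous f)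
    (hPL : CircPL 2 1 f) (hD : ∀ q ∈ D, f q ∈ D) : Nice f := by
  obtain ⟨B, h1, h2, h3, h4⟩ := circPL_aff hPL
  have hbad : BadSet f ⊆ B := fun x hx => by
    by_contra hxB
    exact hx (h4 x hxB)
  exact ⟨hmono, hcont, hD, invD_of_PL h3 h4 hD, hbad.trans h3,
    fun a b => Set.Finite.subset (periodic_finite h1 h2 a b)
      (inter_subset_inter_left _ hbad)⟩

lemma nice_id : Nice (fun x : ℝ => x) := by
  refine ⟨strictMono_id, continuous_id, fun q hq => hq, fun x hx => hx, ?_, ?_⟩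
  · intro x hx
    exfalso
    exact hx ⟨0, 0, 1, by norm_num, fun y _ => by norm_num⟩
  · intro a b
    have : BadSet (fun x : ℝ => x) = ∅ := by
      ext x
      simp only [BadSet, mem_setOf_eq, mem_empty_iff_false, iff_false, not_not]
      exact ⟨0, 0, 1, by norm_num, fun y _ => by norm_num⟩
    rw [this]; simp

lemma nice_comp {f g : ℝ → ℝ} (hf : Nice f) (hg : Nice g) : Nice (fun x => g (f x)) := by
  have hbad : BadSet (fun x => g (f x)) ⊆ BadSet f ∪ f ⁻¹' (BadSet g) := by
    intro x hx
    by_contra hmem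
    rw [mem_union] at hmem
    push_neg at hmem
    exact hx (affAt_comp (affAt_of_not_bad hmem.1) (affAt_of_not_bad hmem.2))
  refine ⟨hg.mono.comp hf.mono, hg.cont.comp hf.cont,
    fun q hq => hg.mapsD _ (hf.mapsD q hq),
    fun x hx => hf.invD x (hg.invD _ hx), ?_, ?_⟩
  · refine hbad.trans (union_subset hf.bad_sub ?_)
    intro x hx
    exact hf.invD x (hg.bad_sub hx)
  · intro a b
    have hsub : BadSet (fun x => g (f x)) ∩ Icc a b ⊆
        (BadSet f ∩ Icc a b) ∪ (f ⁻¹' (BadSet g ∩ Icc (f a) (f b))) := by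
      rintro x ⟨hx, hxa, hxb⟩
      rcases hbad hx with h | h
      · exact Or.inl ⟨h, hxa, hxb⟩
      · exact Or.inr ⟨h, hf.mono.monotone hxa, hf.mono.monotone hxb⟩
    refine Set.Finite.subset (Set.Finite.union (hf.bad_fin a b) ?_) hsub
    exact Set.Finite.preimage (hf.mono.injective.injOn) (hg.bad_fin (f a) (f b))

lemma nice_iter {g : ℝ → ℝ} (hg : Nice g) (n : ℕ) : Nice (g^[n]) := by
  induction n with
  | zero => exact nice_id
  | succ n ih =>
    have he : g^[n+1] = fun x => g (g^[n] x) := by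
      rw [Function.iterate_succ']; rfl
    rw [he]
    exact nice_comp ih hg

lemma iter_per {g : ℝ → ℝ} (hper : ∀ x, g (x + 1) = g x + 2) (n : ℕ) :
    ∀ x, g^[n] (x + 1) = g^[n] x + 2^n := by
  induction n with
  | zero => simp
  | succ n ih =>
    intro x
    rw [Function.iterate_succ', Function.comp_apply, Function.comp_apply, ih]
    have h2 : g^[n] x + 2^n = g^[n] x + ((2^n : ℤ) : ℝ) := by push_cast; ring
    rw [h2]
    have := per_int hper (2^n : ℤ) (g^[n] x)
    rw [this]
    push_cast; ring

lemma cont_of_mono_surj {f : ℝ → ℝ} (hm : StrictMono f) (hs : Function.Surjective f) :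
    Continuous f := by
  have := (StrictMono.orderIsoOfSurjective f hm hs).continuous
  simpa using this

lemma exists_gap {S : Set ℝ} (hS : S.Finite) (u : ℝ) (hu : u ∉ S) :
    ∃ δ > 0, ∀ v ∈ S, δ ≤ |v - u| := by
  classical
  have key : ∀ T : Finset ℝ, ∃ δ > 0, ∀ v ∈ T, (u:ℝ) ≠ v → δ ≤ |v - u| := by
    intro T
    induction T using Finset.induction_on with
    | empty => exact ⟨1, by norm_num, fun v hv => absurd hv (by simp)⟩
    | @insert a s ha ih =>
      obtain ⟨δ, hδ, hδle⟩ := ih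
      by_cases hau : u = a
      · refine ⟨δ, hδ, fun v hv hne => ?_⟩
        rcases Finset.mem_insert.mp hv with rfl | hv
        · exact absurd hau hne
        · exact hδle v hv hne
      · have habs : 0 < |a - u| := abs_pos.mpr (sub_ne_zero.mpr (Ne.symm hau))
        refine ⟨min δ |a - u|, lt_min hδ habs, fun v hv hne => ?_⟩
        rcases Finset.mem_insert.mp hv with rfl | hv
        · exact min_le_right _ _
        · exact le_trans (min_le_left _ _) (hδle v hv hne)
  obtain ⟨δ, hδ, hδle⟩ := key hS.toFinset
  refine ⟨δ, hδ, fun v hv => hδle v (hS.mem_toFinset.mpr hv) (fun h => hu (h ▸ hv))⟩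

lemma affAt_shift {f : ℝ → ℝ} (hper : ∀ x, f (x + 1) = f x + 1) (x : ℝ) :
    AffAt f x ↔ AffAt f (x + 1) := by
  constructor
  · rintro ⟨k, c, ε, hε, hf⟩
    refine ⟨k, c + 1 - 2^k, ε, hε, fun y hy => ?_⟩
    have h1 : |y - 1 - x| < ε := by
      rw [show y - 1 - x = y - (x+1) by ring]; exact hy
    have := hf (y - 1) h1
    have h2 : f y = f (y - 1) + 1 := by
      have := hper (y - 1)
      rwa [sub_add_cancel] at this
    rw [h2, this]; ring
  · rintro ⟨k, c, ε, hε, hf⟩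
    refine ⟨k, c - 1 + 2^k, ε, hε, fun y hy => ?_⟩
    have h1 : |y + 1 - (x + 1)| < ε := by
      rw [show y + 1 - (x+1) = y - x by ring]; exact hy
    have := hf (y + 1) h1
    have h2 : f y = f (y + 1) - 1 := by rw [hper y]; ring
    rw [h2, this]; ring

/-- The main lift-level lemma. -/
lemma main (H K G F : ℝ → ℝ) (m : ℤ)
    (Hmono : StrictMono H) (Hper : ∀ x, H (x + 1) = H x + 1)
    (KH : ∀ x, K (H x) = x) (HK : ∀ x, H (K x) = x)
    (HD : ∀ q ∈ D, H q ∈ D) (KD : ∀ q ∈ D, K q ∈ D)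
    (Gmono : StrictMono G) (Gcont : Continuous G)
    (Gper : ∀ x, G (x + 1) = G x + 2)
    (GPL : CircPL 2 1 G) (GD : ∀ q ∈ D, G q ∈ D)
    (rel : ∀ x, H (2 * x) = G (H x) + m)
    (Fper : ∀ x, F (x + 1) = F x + 1) (Fmono : StrictMono F)
    (Fsurj : Function.Surjective F)
    (FPL : CircPL 2 1 F) (FD : ∀ q ∈ D, F q ∈ D) :
    (∀ x, H (F (K (x + 1))) = H (F (K x)) + 1) ∧
    StrictMono (fun x => H (F (K x))) ∧
    Function.Surjective (fun x => H (F (K x))) ∧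
    CircPL 2 1 (fun x => H (F (K x))) ∧
    (∀ q ∈ D, H (F (K q)) ∈ D) := by
  classical
  set Φ : ℝ → ℝ := fun x => H (F (K x)) with hΦ
  have Hsurj : Function.Surjective H := fun y => ⟨K y, HK y⟩
  have Hcont : Continuous H := cont_of_mono_surj Hmono Hsurj
  have Kmono : StrictMono K := by
    intro a b hab
    have h1 : H (K a) < H (K b) := by rw [HK, HK]; exact hab
    exact lt_of_not_ge fun hle => absurd h1 (not_lt.mpr (Hmono.monotone hle))
  have Ksurj : Function.Surjective K := fun y => ⟨H y, KH y⟩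
  have Kcont : Continuous K := cont_of_mono_surj Kmono Ksurj
  have Kper : ∀ x, K (x + 1) = K x + 1 := by
    intro x
    apply Hmono.injective
    rw [HK, Hper, HK]
  have Hint : ∀ (j : ℤ) (x : ℝ), H (x + j) = H x + j := by
    intro j x
    have := per_int Hper j x
    simpa using this
  have Fcont : Continuous F := cont_of_mono_surj Fmono Fsurj
  have Φcont : Continuous Φ := Hcont.comp (Fcont.comp Kcont)
  have Φmono : StrictMono Φ := fun a b hab => Hmono (Fmono (Kmono hab))
  have Φper : ∀ x, Φ (x + 1) = Φ x + 1 := by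
    intro x; simp only [hΦ]; rw [Kper, Fper, Hper]
  have Φsurj : Function.Surjective Φ := by
    intro y
    obtain ⟨u, hu⟩ := Fsurj (K y)
    exact ⟨H u, by simp only [hΦ]; rw [KH, hu, HK]⟩
  have HinvD : ∀ x, H x ∈ D → x ∈ D := fun x hx => by
    have := KD _ hx; rwa [KH] at this
  have KinvD : ∀ x, K x ∈ D → x ∈ D := fun x hx => by
    have := HD _ hx; rwa [HK] at this
  obtain ⟨BF, hBF1, hBF2, hBF3, hBF4⟩ := circPL_aff FPL
  have FinvD : ∀ x : ℝ, F x ∈ D → x ∈ D := by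
    apply invD_of_PL hBF3 ?_ FD
    intro x hx
    exact hBF4 x hx
  have ΦD : ∀ q ∈ D, Φ q ∈ D := fun q hq => HD _ (FD _ (KD _ hq))
  have ΦinvD : ∀ x, Φ x ∈ D → x ∈ D := fun x hx =>
    KinvD x (FinvD _ (HinvD _ hx))
  have GNice : Nice G := nice_of_PL Gmono Gcont GPL GD
  have GitNice : ∀ n : ℕ, Nice (G^[n]) := nice_iter GNice
  have Gitper : ∀ n : ℕ, ∀ x, G^[n] (x + 1) = G^[n] x + 2^n := iter_per Gper
  -- the iterated conjugation relation
  have relb : ∀ b : ℕ, ∃ mb : ℤ, ∀ x, H ((2:ℝ)^b * x) = G^[b] (H x) + mb := by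
    intro b
    induction b with
    | zero => exact ⟨0, fun x => by simp⟩
    | succ b ih =>
      obtain ⟨mb, hmb⟩ := ih
      refine ⟨m * 2^b + mb, fun x => ?_⟩
      have h1 : (2:ℝ)^(b+1) * x = 2^b * (2 * x) := by ring
      rw [h1, hmb (2*x), rel x]
      have h2 : G^[b] (G (H x) + (m:ℝ)) = G^[b] (G (H x)) + (m:ℝ) * 2^b :=
        per_int (Gitper b) m (G (H x))
      rw [h2, ← Function.iterate_succ_apply]
      push_cast
      ring
  -- key identity on images of affine intervals of F
  have key : ∀ a b : ℝ, (∀ u ∈ Ioo a b, AffAt F u) →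
      ∃ (bb tt : ℕ) (C : ℤ), ∀ y ∈ Ioo (H a) (H b), G^[bb] (Φ y) = G^[tt] y + C := by
    intro a b haff
    by_cases hab : a < b
    case neg =>
      refine ⟨0, 0, 0, fun y hy => ?_⟩
      exfalso
      exact hab (Hmono.lt_iff_lt.mp (lt_trans hy.1 hy.2))
    case pos =>
    obtain ⟨k, c, hkc⟩ := affOn_Ioo haff
    obtain ⟨q, hqD, hq1, hq2⟩ := D_dense hab
    have hcD : c ∈ D := by
      have hq : F q = (2:ℝ)^k * q + c := hkc q ⟨hq1, hq2⟩
      have h5 := D_sub (hq ▸ FD q hqD) (D_zpow_mul k hqD)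
      simpa using h5
    obtain ⟨a', e, hce⟩ := mem_D_iff.mp hcD
    set bb : ℕ := (max (-k) (max (-e) 0)).toNat with hbb
    have hbb1 : -k ≤ (bb:ℤ) := le_trans (le_max_left _ _) (Int.self_le_toNat _)
    have hbb2 : -e ≤ (bb:ℤ) :=
      le_trans (le_trans (le_max_left (-e) 0) (le_max_right (-k) _)) (Int.self_le_toNat _)
    have hbbk : 0 ≤ (bb:ℤ) + k := by linarith
    have hbbe : 0 ≤ (bb:ℤ) + e := by linarith
    set tt : ℕ := ((bb:ℤ) + k).toNat with htt
    have htt' : (tt:ℤ) = (bb:ℤ) + k := Int.toNat_of_nonneg hbbk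
    set N : ℤ := a' * 2^(((bb:ℤ) + e).toNat) with hN
    have hNval : (N:ℝ) = 2^(bb:ℕ) * c := by
      rw [hN, hce]
      push_cast
      rw [← zpow_natCast (2:ℝ) (((bb:ℤ) + e).toNat), Int.toNat_of_nonneg hbbe,
        ← zpow_natCast (2:ℝ) bb, zpow_add₀ (by norm_num : (2:ℝ) ≠ 0)]
      ring
    have hpow : (2:ℝ)^(bb:ℕ) * (2:ℝ)^k = 2^(tt:ℕ) := by
      rw [← zpow_natCast (2:ℝ) bb, ← zpow_natCast (2:ℝ) tt, htt',
        ← zpow_add₀ (by norm_num : (2:ℝ) ≠ 0)]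
    obtain ⟨mbb, hmbb⟩ := relb bb
    obtain ⟨mtt, hmtt⟩ := relb tt
    refine ⟨bb, tt, mtt + N - mbb, fun y hy => ?_⟩
    have hKy : K y ∈ Ioo a b := by
      constructor
      · have := Kmono hy.1; rwa [KH] at this
      · have := Kmono hy.2; rwa [KH] at this
    have hFKy : F (K y) = (2:ℝ)^k * K y + c := hkc _ hKy
    have step1 : (2:ℝ)^(bb:ℕ) * F (K y) = 2^(tt:ℕ) * K y + N := by
      rw [hFKy, hNval]
      rw [mul_add, ← mul_assoc, hpow]
    have step2 : H ((2:ℝ)^(bb:ℕ) * F (K y)) = G^[bb] (Φ y) + mbb := hmbb _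
    have step3 : H ((2:ℝ)^(tt:ℕ) * K y + N) = G^[tt] y + mtt + N := by
      rw [Hint N _, hmtt (K y), HK]
    have := step2.symm.trans ((congrArg H step1).trans step3)
    push_cast
    linarith
  -- local affineness of Φ from the key identity
  have loc : ∀ (bb tt : ℕ) (C : ℤ) (I : Set ℝ), IsOpen I →
      (∀ y ∈ I, G^[bb] (Φ y) = G^[tt] y + C) →
      ∀ y ∈ I, y ∉ BadSet (G^[tt]) → Φ y ∉ BadSet (G^[bb]) → AffAt Φ y := by
    intro bb tt C I hI hid y hyI hy1 hy2
    obtain ⟨κ, γ, ε₁, hε₁, h1⟩ := affAt_of_not_bad hy1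
    obtain ⟨β, γ', ε₂, hε₂, h2⟩ := affAt_of_not_bad hy2
    obtain ⟨ε₃, hε₃, h3⟩ := Metric.continuousAt_iff.mp Φcont.continuousAt ε₂ hε₂
    obtain ⟨ε₄, hε₄, h4⟩ := Metric.isOpen_iff.mp hI y hyI
    refine ⟨κ - β, (γ + C - γ') * (2:ℝ)^(-β), min (min ε₁ ε₃) ε₄, by positivity, fun z hz => ?_⟩
    have hz1 : |z - y| < ε₁ := lt_of_lt_of_le hz (le_trans (min_le_left _ _) (min_le_left _ _))
    have hz3 : |z - y| < ε₃ := lt_of_lt_of_le hz (le_trans (min_le_left _ _) (min_le_right _ _))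
    have hz4 : z ∈ I := h4 (by rw [Metric.mem_ball, Real.dist_eq]; exact lt_of_lt_of_le hz (min_le_right _ _))
    have e1 : G^[bb] (Φ z) = G^[tt] z + C := hid z hz4
    have e2 : G^[tt] z = (2:ℝ)^κ * z + γ := h1 z hz1
    have e3 : G^[bb] (Φ z) = (2:ℝ)^β * Φ z + γ' := by
      apply h2
      have := h3 (show dist z y < ε₃ by rwa [Real.dist_eq])
      rwa [Real.dist_eq] at this
    have e4 : (2:ℝ)^β * Φ z + γ' = (2:ℝ)^κ * z + γ + C := by rw [← e3, e1, e2]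
    have hβ : (0:ℝ) < 2^β := two_zpow_pos β
    have e5 : Φ z = ((2:ℝ)^κ * z + γ + C - γ') * (2:ℝ)^(-β) := by
      rw [zpow_neg]
      field_simp
      linarith
    rw [e5, zpow_sub₀ (by norm_num : (2:ℝ) ≠ 0), zpow_neg]
    field_simp
    ring
  -- handling one affine interval of F
  have handle : ∀ a b : ℝ, (∀ u ∈ Ioo a b, AffAt F u) →
      (BadSet Φ ∩ Ioo (H a) (H b)) ⊆ D ∧ (BadSet Φ ∩ Ioo (H a) (H b)).Finite := by
    intro a b haff
    obtain ⟨bb, tt, C, hkey⟩ := key a b haff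
    have hsub : BadSet Φ ∩ Ioo (H a) (H b) ⊆
        (BadSet (G^[tt]) ∪ Φ ⁻¹' (BadSet (G^[bb]))) ∩ Ioo (H a) (H b) := by
      rintro y ⟨hyB, hyI⟩
      refine ⟨?_, hyI⟩
      by_contra hmem
      rw [mem_union] at hmem; push_neg at hmem
      exact hyB (loc bb tt C _ isOpen_Ioo hkey y hyI hmem.1 hmem.2)
    constructor
    · intro y hy
      rcases (hsub hy).1 with h | h
      · exact (GitNice tt).bad_sub h
      · exact ΦinvD y ((GitNice bb).bad_sub h)
    · have h1 : (BadSet (G^[tt]) ∩ Icc (H a) (H b)).Finite := (GitNice tt).bad_fin _ _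
      have h2 : (Φ ⁻¹' (BadSet (G^[bb]) ∩ Icc (Φ (H a)) (Φ (H b)))).Finite :=
        Set.Finite.preimage Φmono.injective.injOn ((GitNice bb).bad_fin _ _)
      refine Set.Finite.subset (h1.union h2) ?_
      intro y hy
      obtain ⟨hyU, hyI⟩ := hsub hy
      rcases hyU with h | h
      · exact Or.inl ⟨h, le_of_lt hyI.1, le_of_lt hyI.2⟩
      · exact Or.inr ⟨h, Φmono.monotone (le_of_lt hyI.1), Φmono.monotone (le_of_lt hyI.2)⟩
  -- local control of the bad set of Φ
  have cover : ∀ x₀ : ℝ, ∃ ε > 0, (BadSet Φ ∩ Metric.ball x₀ ε) ⊆ D ∧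
      (BadSet Φ ∩ Metric.ball x₀ ε).Finite := by
    intro x₀
    set u₀ := K x₀ with hu₀
    have hx₀ : H u₀ = x₀ := HK x₀
    have hfinB : ((BF ∩ Icc (u₀-1) (u₀+1)) \ {u₀}).Finite :=
      Set.Finite.subset (periodic_finite hBF1 hBF2 (u₀-1) (u₀+1)) diff_subset
    obtain ⟨δ₀, hδ₀, hgap⟩ := exists_gap hfinB u₀ (fun h => h.2 rfl)
    set δ := min δ₀ 1 with hδdef
    have hδ : 0 < δ := lt_min hδ₀ one_pos
    have hδ1 : δ ≤ 1 := min_le_right _ _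
    have hBδ : ∀ v ∈ BF, v ∈ Ioo (u₀ - δ) (u₀ + δ) → v = u₀ := by
      intro v hv hvI
      by_contra hne
      have hv1 : v ∈ Icc (u₀-1) (u₀+1) := ⟨by linarith [hvI.1], by linarith [hvI.2]⟩
      have hge := hgap v ⟨⟨hv, hv1⟩, hne⟩
      have hlt : |v - u₀| < δ := abs_lt.mpr ⟨by linarith [hvI.1], by linarith [hvI.2]⟩
      linarith [min_le_left δ₀ 1]
    have hlt1 : H (u₀ - δ) < x₀ := by rw [← hx₀]; exact Hmono (by linarith)
    have hlt2 : x₀ < H (u₀ + δ) := by rw [← hx₀]; exact Hmono (by linarith)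
    set ε := min (x₀ - H (u₀ - δ)) (H (u₀ + δ) - x₀) with hε
    have hεpos : 0 < ε := lt_min (by linarith) (by linarith)
    have hball : Metric.ball x₀ ε ⊆ Ioo (H (u₀ - δ)) (H (u₀ + δ)) := by
      intro y hy
      rw [Metric.mem_ball, Real.dist_eq, abs_lt] at hy
      constructor
      · have := min_le_left (x₀ - H (u₀ - δ)) (H (u₀ + δ) - x₀); linarith [hy.1]
      · have := min_le_right (x₀ - H (u₀ - δ)) (H (u₀ + δ) - x₀); linarith [hy.2]
    by_cases hu₀B : u₀ ∈ BF
    · have haff1 : ∀ u ∈ Ioo (u₀ - δ) u₀, AffAt F u := by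
        intro u hu
        apply hBF4
        intro huB
        exact absurd (hBδ u huB ⟨hu.1, by linarith [hu.2]⟩) (ne_of_lt hu.2)
      have haff2 : ∀ u ∈ Ioo u₀ (u₀ + δ), AffAt F u := by
        intro u hu
        apply hBF4
        intro huB
        exact absurd (hBδ u huB ⟨by linarith [hu.1], hu.2⟩) (ne_of_gt hu.1)
      obtain ⟨hD1, hF1⟩ := handle _ _ haff1
      obtain ⟨hD2, hF2⟩ := handle _ _ haff2
      refine ⟨ε, hεpos, ?_, ?_⟩
      · rintro y ⟨hyB, hyb⟩
        obtain ⟨hy1, hy2⟩ := hball hyb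
        rcases lt_trichotomy y x₀ with h | h | h
        · exact hD1 ⟨hyB, hy1, by rwa [hx₀]⟩
        · rw [h, ← hx₀]
          exact HD u₀ (hBF3 hu₀B)
        · exact hD2 ⟨hyB, by rwa [hx₀], hy2⟩
      · refine Set.Finite.subset ((hF1.union (Set.finite_singleton x₀)).union hF2) ?_
        rintro y ⟨hyB, hyb⟩
        obtain ⟨hy1, hy2⟩ := hball hyb
        rcases lt_trichotomy y x₀ with h | h | h
        · exact Or.inl (Or.inl ⟨hyB, hy1, by rwa [hx₀]⟩)
        · exact Or.inl (Or.inr h)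
        · exact Or.inr ⟨hyB, by rwa [hx₀], hy2⟩
    · have haff : ∀ u ∈ Ioo (u₀ - δ) (u₀ + δ), AffAt F u := by
        intro u hu
        apply hBF4
        intro huB
        exact hu₀B ((hBδ u huB hu) ▸ huB)
      obtain ⟨hD1, hF1⟩ := handle _ _ haff
      refine ⟨ε, hεpos, ?_, ?_⟩
      · rintro y ⟨hyB, hyb⟩
        exact hD1 ⟨hyB, hball hyb⟩
      · refine Set.Finite.subset hF1 ?_
        rintro y ⟨hyB, hyb⟩
        exact ⟨hyB, hball hyb⟩
  -- assemble `CircPL`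
  have badper : ∀ x ∈ BadSet Φ, x + 1 ∈ BadSet Φ ∧ x - 1 ∈ BadSet Φ := by
    intro x hx
    constructor
    · intro haff
      exact hx ((affAt_shift Φper x).mpr haff)
    · intro haff
      apply hx
      have := (affAt_shift Φper (x-1)).mp haff
      rwa [sub_add_cancel] at this
  have badD : BadSet Φ ⊆ D := by
    intro x hx
    obtain ⟨ε, hε, hsubD, _⟩ := cover x
    exact hsubD ⟨hx, Metric.mem_ball_self hε⟩
  have badfin : (BadSet Φ ∩ Ico (0:ℝ) 1).Finite := by
    choose ε hε hsubD hfin using cover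
    obtain ⟨t, _, ht⟩ := isCompact_Icc.elim_nhds_subcover (fun x => Metric.ball x (ε x))
      (fun x (_ : x ∈ Icc (0:ℝ) 1) => Metric.ball_mem_nhds x (hε x))
    refine Set.Finite.subset (Set.Finite.biUnion t.finite_toSet (fun x _ => hfin x)) ?_
    rintro y ⟨hy, hy0, hy1⟩
    have hyI : y ∈ Icc (0:ℝ) 1 := ⟨hy0, le_of_lt hy1⟩
    obtain ⟨x, hx⟩ := mem_iUnion.mp (ht hyI)
    obtain ⟨hxt, hyx⟩ := mem_iUnion.mp hx
    exact mem_biUnion hxt ⟨hy, hyx⟩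
  have ΦPL : CircPL 2 1 Φ := by
    refine ⟨BadSet Φ, badfin, badper, badD, ?_⟩
    intro x hx
    obtain ⟨k, c, ε, hε, ha⟩ := affAt_of_not_bad hx
    exact ⟨k, c, ε, hε, fun y hy => by rw [ha y hy]; norm_num⟩
  exact ⟨Φper, Φmono, Φsurj, ΦPL, ΦD⟩

lemma coe_eq_imp {a b : ℝ} (h : ((a:ℝ) : AddCircle (1:ℝ)) = ((b:ℝ) : AddCircle (1:ℝ))) :
    ∃ n : ℤ, a = b + n := by
  have h0 : ((a - b : ℝ) : AddCircle (1:ℝ)) = 0 := by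
    have e : ((a - b : ℝ) : AddCircle (1:ℝ)) = ((a:ℝ) : AddCircle (1:ℝ)) - ((b:ℝ) : AddCircle (1:ℝ)) := rfl
    rw [e, h, sub_self]
  obtain ⟨n, hn⟩ := (AddCircle.coe_eq_zero_iff (1:ℝ)).mp h0
  refine ⟨n, ?_⟩
  have h1 : (n:ℝ) * 1 = a - b := by simpa [zsmul_eq_mul] using hn
  linarith

lemma memD_of_circle {x : ℝ} (hx : ((x:ℝ) : AddCircle (1:ℝ)) ∈ dyadicCircle) : x ∈ D := by
  obtain ⟨q, hq, he⟩ := hx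
  obtain ⟨n, hn⟩ := coe_eq_imp he
  rw [hn]
  exact D_add_int hq n

lemma half (h h' : AddCircle (1:ℝ) → AddCircle (1:ℝ)) (H K : ℝ → ℝ)
    (hHlift : ∀ x : ℝ, h ((x:ℝ) : AddCircle (1:ℝ)) = ((H x : ℝ) : AddCircle (1:ℝ)))
    (hKlift : ∀ x : ℝ, h' ((x:ℝ) : AddCircle (1:ℝ)) = ((K x : ℝ) : AddCircle (1:ℝ)))
    (Hmono : StrictMono H) (Hper : ∀ x, H (x + 1) = H x + 1)
    (KH : ∀ x, K (H x) = x) (HK : ∀ x, H (K x) = x)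
    (HD : ∀ q ∈ D, H q ∈ D) (KD : ∀ q ∈ D, K q ∈ D)
    (hinv : ∀ z, h' (h z) = z)
    (hconj : MemTbar 2 1 (h ∘ nu2 ∘ h')) :
    ∀ f, MemT 2 1 f → MemT 2 1 (h ∘ f ∘ h') := by
  intro f hf
  obtain ⟨F, hFlift, Fper, Fmono, Fsurj, FPL, FD⟩ := hf
  obtain ⟨G, d, hd, hGlift, Gperd, Gmono, Gcont, GPL, GD⟩ := hconj
  have Hsurj : Function.Surjective H := fun y => ⟨K y, HK y⟩
  have Hcont : Continuous H := cont_of_mono_surj Hmono Hsurj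
  have hint : ∀ x : ℝ, ∃ n : ℤ, H (2*x) - G (H x) = n := by
    intro x
    have e2 : h' ((H x : ℝ) : AddCircle (1:ℝ)) = ((x:ℝ) : AddCircle (1:ℝ)) := by
      rw [← hHlift x, hinv]
    have e1 : ((H (2*x) : ℝ) : AddCircle (1:ℝ)) = ((G (H x) : ℝ) : AddCircle (1:ℝ)) := by
      rw [← hHlift (2*x), ← hGlift (H x)]
      show h (((2*x : ℝ) : AddCircle (1:ℝ))) = h (nu2 (h' ((H x : ℝ) : AddCircle (1:ℝ))))
      rw [e2]
      congr 1
      show (((2*x : ℝ) : AddCircle (1:ℝ))) = ((x:ℝ) : AddCircle (1:ℝ)) + ((x:ℝ) : AddCircle (1:ℝ))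
      rw [show (2:ℝ)*x = x + x from by ring]
      rfl
    obtain ⟨n, hn⟩ := coe_eq_imp e1
    exact ⟨n, by linarith⟩
  have hcont : Continuous (fun x => H (2*x) - G (H x)) :=
    (Hcont.comp (continuous_const.mul continuous_id)).sub (Gcont.comp Hcont)
  have hconst := intval_const hcont hint
  obtain ⟨m, hm0⟩ := hint 0
  have rel : ∀ x, H (2*x) = G (H x) + m := by
    intro x
    have h1 := (hconst x 0).trans hm0
    linarith
  have Gper2 : ∀ y, G (y + 1) = G y + 2 := by
    intro y
    obtain ⟨x, rfl⟩ := Hsurj y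
    have h2 := rel (x+1)
    have h3 := rel x
    have h4 : H (2*(x+1)) = H (2*x) + 2 := by
      have h5 := per_int Hper 2 (2*x)
      have e : 2*(x+1) = 2*x + ((2:ℤ):ℝ) := by push_cast; ring
      rw [e, h5]; push_cast; ring
    rw [← Hper x]
    linarith
  obtain ⟨Φper, Φmono, Φsurj, ΦPL, ΦD⟩ :=
    main H K G F m Hmono Hper KH HK HD KD Gmono Gcont Gper2 GPL GD rel Fper Fmono Fsurj FPL FD
  refine ⟨fun x => H (F (K x)), ?_, Φper, Φmono, Φsurj, ΦPL, ΦD⟩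
  intro x
  show h (f (h' ((x:ℝ) : AddCircle (1:ℝ)))) = _
  rw [hKlift x, hFlift (K x), hHlift (F (K x))]

end St16

/-- **Lemma 6.3.** If `h` is an orientation-preserving homeomorphism of
`S¹` with `h(ℤ[1/2]) = ℤ[1/2]` such that `h ν₂ h⁻¹` and `h⁻¹ ν₂ h` are both
everywhere-defined elements of `T̄_{2,1}`, then `h` normalizes `T_{2,1}`:
`h T_{2,1} h⁻¹ = T_{2,1}`. -/
theorem stmt_16 (h h' : AddCircle (1 : ℝ) → AddCircle (1 : ℝ))
    (hh : OrientedHomeo 1 h)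
    (hinv₁ : ∀ z, h' (h z) = z) (hinv₂ : ∀ z, h (h' z) = z)
    (hdy : h '' dyadicCircle = dyadicCircle)
    (hconj₁ : MemTbar 2 1 (h ∘ nu2 ∘ h'))
    (hconj₂ : MemTbar 2 1 (h' ∘ nu2 ∘ h)) :
    (∀ f, MemT 2 1 f → MemT 2 1 (h ∘ f ∘ h')) ∧
    (∀ f, MemT 2 1 f → MemT 2 1 (h' ∘ f ∘ h)) := by
  obtain ⟨H, hHlift, Hper, Hmono, Hsurj⟩ := hh
  set E := StrictMono.orderIsoOfSurjective H Hmono Hsurj with hE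
  set K : ℝ → ℝ := fun y => E.symm y with hKdef
  have KH : ∀ x, K (H x) = x := by
    intro x
    have e : E x = H x := rfl
    simp only [hKdef]
    rw [← e]
    exact E.symm_apply_apply x
  have HK : ∀ x, H (K x) = x := by
    intro x
    have e : H (E.symm x) = E (E.symm x) := rfl
    simp only [hKdef]
    rw [e]
    exact E.apply_symm_apply x
  have Kper : ∀ x, K (x + 1) = K x + 1 := fun x =>
    Hmono.injective (by rw [HK, Hper, HK])
  have Kmono : StrictMono K := by
    intro a b hab
    have h1 : H (K a) < H (K b) := by rw [HK, HK]; exact hab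
    exact lt_of_not_ge fun hle => absurd h1 (not_lt.mpr (Hmono.monotone hle))
  have hKlift : ∀ x : ℝ, h' ((x:ℝ) : AddCircle (1:ℝ)) = ((K x : ℝ) : AddCircle (1:ℝ)) := by
    intro x
    have e1 : ((x:ℝ) : AddCircle (1:ℝ)) = h ((K x : ℝ) : AddCircle (1:ℝ)) := by
      rw [hHlift (K x), HK]
    rw [e1, hinv₁]
  have hDyH : ∀ q ∈ zpows 2, H q ∈ zpows 2 := by
    intro q hq
    have h1 : ((H q : ℝ) : AddCircle (1:ℝ)) ∈ dyadicCircle := by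
      rw [← hHlift q, ← hdy]
      exact ⟨((q:ℝ) : AddCircle (1:ℝ)), ⟨q, hq, rfl⟩, rfl⟩
    exact St16.memD_of_circle h1
  have hDyK : ∀ q ∈ zpows 2, K q ∈ zpows 2 := by
    intro q hq
    have h1 : ((K q : ℝ) : AddCircle (1:ℝ)) ∈ dyadicCircle := by
      rw [← hKlift q]
      have h2 : ((q:ℝ) : AddCircle (1:ℝ)) ∈ dyadicCircle := ⟨q, hq, rfl⟩
      rw [← hdy] at h2
      obtain ⟨z, hz, hzq⟩ := h2
      rw [← hzq, hinv₁]
      exact hz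
    exact St16.memD_of_circle h1
  constructor
  · exact St16.half h h' H K hHlift hKlift Hmono Hper KH HK hDyH hDyK hinv₁ hconj₁
  · exact St16.half h' h K H hKlift hHlift Kmono Kper HK KH hDyK hDyH hinv₂ hconj₂
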